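/- arXiv:2006.02286 — 4 statements merged into one kernel-verified Lean document; each statement's English description precedes it below -/
import Mathlib

section
/- Let Σ be symmetric positive definite, τ ∈ ℝ^d, and suppose β* maximizes f(β) = βᵀτ/(βᵀΣβ)^{1/2} over {β : β ≥ 0, ‖β‖ = 1}. If β*ᵀτ < 0, then β* has exactly one nonzero coordinate (i.e., β* is a Cartesian unit vector). -/
open Matrix

noncomputable section

/-- If `β*` maximizes `f(β) = βᵀτ/(βᵀΣβ)^{1/2}` over the nonnegative
Euclidean unit sphere and `β*ᵀτ < 0`, then `β*` has exactly one nonzero coordinate. -/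
theorem stmt_4 {d : ℕ} (S : Matrix (Fin d) (Fin d) ℝ) (hS : S.PosDef) (τ : Fin d → ℝ)
    (β : Fin d → ℝ) (hβnn : ∀ i, 0 ≤ β i) (hβnorm : Real.sqrt (β ⬝ᵥ β) = 1)
    (hmax : ∀ γ : Fin d → ℝ, (∀ i, 0 ≤ γ i) → Real.sqrt (γ ⬝ᵥ γ) = 1 →
      (γ ⬝ᵥ τ) / Real.sqrt (γ ⬝ᵥ (S *ᵥ γ)) ≤ (β ⬝ᵥ τ) / Real.sqrt (β ⬝ᵥ (S *ᵥ β)))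
    (hneg : β ⬝ᵥ τ < 0) :
    ∃! u : Fin d, β u ≠ 0 := by
  classical
  -- positivity of the quadratic form
  have hq : ∀ x : Fin d → ℝ, x ≠ 0 → 0 < x ⬝ᵥ (S *ᵥ x) := by
    intro x hx
    have := hS.dotProduct_mulVec_pos hx
    simpa using this
  -- symmetry of the bilinear form
  have hsym : ∀ i j, S i j = S j i := by
    intro i j
    have := congrFun (congrFun hS.1 i) j
    simpa [Matrix.conjTranspose_apply] using this.symm
  have hB : ∀ x y : Fin d → ℝ, x ⬝ᵥ (S *ᵥ y) = y ⬝ᵥ (S *ᵥ x) := by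
    intro x y
    simp only [dotProduct, mulVec, Finset.mul_sum]
    rw [Finset.sum_comm]
    apply Finset.sum_congr rfl
    intro i _
    apply Finset.sum_congr rfl
    intro j _
    rw [hsym j i]
    ring
  -- key: any nonzero nonnegative vector has ratio at most that of β
  have key : ∀ a : Fin d → ℝ, (∀ i, 0 ≤ a i) → a ≠ 0 →
      (a ⬝ᵥ τ) / Real.sqrt (a ⬝ᵥ (S *ᵥ a)) ≤ (β ⬝ᵥ τ) / Real.sqrt (β ⬝ᵥ (S *ᵥ β)) := by
    intro a hnn ha
    have hA : 0 < a ⬝ᵥ a := by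
      rcases (lt_or_eq_of_le (Finset.sum_nonneg fun i _ => mul_self_nonneg (a i)) :
        (0:ℝ) < a ⬝ᵥ a ∨ 0 = a ⬝ᵥ a) with h | h
      · exact h
      · exfalso; exact ha ((dotProduct_self_eq_zero).mp h.symm)
    set c : ℝ := (Real.sqrt (a ⬝ᵥ a))⁻¹ with hc
    have hcpos : 0 < c := inv_pos.mpr (Real.sqrt_pos.mpr hA)
    have hγ := hmax (c • a) (fun i => by
      have : (c • a) i = c * a i := rfl
      rw [this]; exact mul_nonneg hcpos.le (hnn i))
    have hd1 : (c • a) ⬝ᵥ (c • a) = c * (c * (a ⬝ᵥ a)) := by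
      rw [smul_dotProduct, dotProduct_smul]; simp [mul_assoc]
    have hnorm1 : Real.sqrt ((c • a) ⬝ᵥ (c • a)) = 1 := by
      rw [hd1]
      have h0 : Real.sqrt (a ⬝ᵥ a) ≠ 0 := ne_of_gt (Real.sqrt_pos.mpr hA)
      have : c * (c * (a ⬝ᵥ a)) = 1 := by
        rw [hc]
        rw [← Real.mul_self_sqrt hA.le]
        field_simp
        rw [Real.sqrt_sq (Real.sqrt_nonneg _)]
      rw [this, Real.sqrt_one]
    have hγ2 := hγ hnorm1
    have e1 : (c • a) ⬝ᵥ τ = c * (a ⬝ᵥ τ) := smul_dotProduct c a τ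
    have e2 : (c • a) ⬝ᵥ (S *ᵥ (c • a)) = c * (c * (a ⬝ᵥ (S *ᵥ a))) := by
      rw [Matrix.mulVec_smul, smul_dotProduct, dotProduct_smul]
      simp [mul_assoc]
    have e3 : Real.sqrt ((c • a) ⬝ᵥ (S *ᵥ (c • a))) = c * Real.sqrt (a ⬝ᵥ (S *ᵥ a)) := by
      rw [e2, ← mul_assoc, Real.sqrt_mul (by positivity), Real.sqrt_mul_self hcpos.le]
    rw [e1, e3, mul_div_mul_left _ _ (ne_of_gt hcpos)] at hγ2
    exact hγ2
  -- β is nonzero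
  have hβ1 : β ⬝ᵥ β = 1 := by
    have h : Real.sqrt (β ⬝ᵥ β) ^ 2 = β ⬝ᵥ β :=
      Real.sq_sqrt (Finset.sum_nonneg fun i _ => mul_self_nonneg (β i))
    rw [hβnorm] at h
    simpa using h.symm
  have hβne : β ≠ 0 := by
    intro h; rw [h] at hβ1; simp [dotProduct] at hβ1
  obtain ⟨u, hu⟩ : ∃ u, β u ≠ 0 := by
    by_contra h
    push_neg at h
    exact hβne (funext fun i => h i)
  refine ⟨u, hu, ?_⟩
  intro v hv
  by_contra hvu
  -- split β = a + b with b supported on v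
  set a : Fin d → ℝ := fun k => if k = v then 0 else β k with hadef
  set b : Fin d → ℝ := fun k => if k = v then β k else 0 with hbdef
  have hab : β = a + b := by
    funext k
    by_cases h : k = v <;> simp [hadef, hbdef, h]
  have huv : u ≠ v := fun h => hvu h.symm
  have hau : a u = β u := by simp [hadef, huv]
  have hann : ∀ i, 0 ≤ a i := by
    intro i
    by_cases h : i = v
    · simp [hadef, h]
    · simpa [hadef, h] using hβnn i
  have hbnn : ∀ i, 0 ≤ b i := by
    intro i
    by_cases h : i = v
    · simpa [hbdef, h] using hβnn v
    · simp [hbdef, h]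
  have hane : a ≠ 0 := fun h => hu (by rw [← hau, h]; rfl)
  have hbne : b ≠ 0 := fun h => hv (by
    have : b v = 0 := by rw [h]; rfl
    simpa [hbdef] using this)
  have hqa : 0 < a ⬝ᵥ (S *ᵥ a) := hq a hane
  have hqb : 0 < b ⬝ᵥ (S *ᵥ b) := hq b hbne
  set qa := a ⬝ᵥ (S *ᵥ a) with hqadef
  set qb := b ⬝ᵥ (S *ᵥ b) with hqbdef
  set t := a ⬝ᵥ (S *ᵥ b) with htdef
  -- strict Cauchy–Schwarz
  have hw : (qb • a - t • b) ≠ 0 := by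
    intro h
    have hwu : (qb • a - t • b) u = 0 := by rw [h]; rfl
    have hbu : b u = 0 := by simp [hbdef, huv]
    simp only [Pi.sub_apply, Pi.smul_apply, smul_eq_mul, hbu, mul_zero, sub_zero] at hwu
    rw [hau] at hwu
    rcases mul_eq_zero.mp hwu with h1 | h1
    · exact absurd h1 (ne_of_gt hqb)
    · exact hu h1
  have hcs : t ^ 2 < qa * qb := by
    have hpos := hq _ hw
    have expand : (qb • a - t • b) ⬝ᵥ (S *ᵥ (qb • a - t • b)) =
        qb ^ 2 * qa - 2 * qb * t ^ 2 + t ^ 2 * qb := by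
      simp only [Matrix.mulVec_sub, Matrix.mulVec_smul, sub_dotProduct, dotProduct_sub,
        smul_dotProduct, dotProduct_smul, smul_eq_mul]
      rw [hB b a]
      simp only [hqadef, hqbdef, htdef]
      ring
    rw [expand] at hpos
    nlinarith [hqb]
  have htlt : t < Real.sqrt qa * Real.sqrt qb := by
    have h1 : t ≤ |t| := le_abs_self t
    have h2 : |t| < Real.sqrt (qa * qb) := by
      rw [← Real.sqrt_sq_eq_abs]
      exact Real.sqrt_lt_sqrt (sq_nonneg t) hcs
    calc t ≤ |t| := h1
      _ < Real.sqrt (qa * qb) := h2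
      _ = Real.sqrt qa * Real.sqrt qb := Real.sqrt_mul hqa.le qb
  -- expansion of q(β)
  have hexp : β ⬝ᵥ (S *ᵥ β) = qa + 2 * t + qb := by
    rw [hab]
    simp only [Matrix.mulVec_add, add_dotProduct, dotProduct_add]
    rw [hB b a]
    simp only [hqadef, hqbdef, htdef]
    ring
  -- strict triangle inequality
  set Na := Real.sqrt qa with hNadef
  set Nb := Real.sqrt qb with hNbdef
  have hNa : 0 < Na := Real.sqrt_pos.mpr hqa
  have hNb : 0 < Nb := Real.sqrt_pos.mpr hqb
  have htri : Real.sqrt (β ⬝ᵥ (S *ᵥ β)) < Na + Nb := by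
    have h1 : β ⬝ᵥ (S *ᵥ β) < (Na + Nb) ^ 2 := by
      rw [hexp]
      have e1 : Na ^ 2 = qa := Real.sq_sqrt hqa.le
      have e2 : Nb ^ 2 = qb := Real.sq_sqrt hqb.le
      nlinarith [htlt]
    calc Real.sqrt (β ⬝ᵥ (S *ᵥ β)) < Real.sqrt ((Na + Nb) ^ 2) :=
          Real.sqrt_lt_sqrt (hq β hβne).le h1
      _ = Na + Nb := by rw [Real.sqrt_sq (by positivity)]
  have hNβ : 0 < Real.sqrt (β ⬝ᵥ (S *ᵥ β)) := Real.sqrt_pos.mpr (hq β hβne)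
  set Nβ := Real.sqrt (β ⬝ᵥ (S *ᵥ β)) with hNβdef
  -- numerator splits
  have hgsplit : β ⬝ᵥ τ = a ⬝ᵥ τ + b ⬝ᵥ τ := by
    rw [hab, add_dotProduct]
  -- the two restricted ratios are at most the max ratio
  have hka := key a hann hane
  have hkb := key b hbnn hbne
  set M := max ((a ⬝ᵥ τ) / Na) ((b ⬝ᵥ τ) / Nb) with hMdef
  have hM : M ≤ (β ⬝ᵥ τ) / Nβ := max_le hka hkb
  have hga : a ⬝ᵥ τ ≤ M * Na := by
    have : (a ⬝ᵥ τ) / Na ≤ M := le_max_left _ _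
    calc a ⬝ᵥ τ = (a ⬝ᵥ τ) / Na * Na := by field_simp
      _ ≤ M * Na := mul_le_mul_of_nonneg_right this hNa.le
  have hgb : b ⬝ᵥ τ ≤ M * Nb := by
    have : (b ⬝ᵥ τ) / Nb ≤ M := le_max_right _ _
    calc b ⬝ᵥ τ = (b ⬝ᵥ τ) / Nb * Nb := by field_simp
      _ ≤ M * Nb := mul_le_mul_of_nonneg_right this hNb.le
  have hmed : (β ⬝ᵥ τ) / (Na + Nb) ≤ M := by
    rw [div_le_iff₀ (by positivity)]
    rw [hgsplit]
    nlinarith [hga, hgb]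
  have hstrict : (β ⬝ᵥ τ) / Nβ < (β ⬝ᵥ τ) / (Na + Nb) := by
    rw [div_lt_div_iff₀ hNβ (by positivity)]
    nlinarith [htri, hneg]
  linarith [hstrict, hmed, hM]
end
end

section
/- Let Σ be symmetric positive definite, τ ∈ ℝ^d, and suppose all coordinates of τ are negative. Then the maximum of f(β) = βᵀτ/(βᵀΣβ)^{1/2} over {β ≥ 0, ‖β‖ = 1} is attained at the Cartesian unit vector e_{u*} where u* = argmax_u τ_u/√(Σ_{uu}), and equals τ_{u*}/√(Σ_{u*u*}). -/
open Matrix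

noncomputable section

private lemma sqrt_dot_eq_norm {d : ℕ} (v : Fin d → ℝ) :
    Real.sqrt (v ⬝ᵥ v) = ‖(WithLp.equiv 2 (Fin d → ℝ)).symm v‖ := by
  rw [EuclideanSpace.norm_eq]
  congr 1
  simp [dotProduct, sq_abs, sq]

private lemma triangle_key {d : ℕ} (B : Matrix (Fin d) (Fin d) ℝ) (γ : Fin d → ℝ)
    (hγ : ∀ i, 0 ≤ γ i) :
    Real.sqrt ((B *ᵥ γ) ⬝ᵥ (B *ᵥ γ)) ≤
      ∑ u, γ u * Real.sqrt ((B *ᵥ Pi.single u 1) ⬝ᵥ (B *ᵥ Pi.single u 1)) := by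
  have hγsum : γ = ∑ u, γ u • (Pi.single u 1 : Fin d → ℝ) := by
    funext i
    simp [Finset.sum_apply, Pi.single_apply, mul_comm]
  have hBsum : B *ᵥ γ = ∑ u, γ u • (B *ᵥ Pi.single u 1) := by
    conv_lhs => rw [hγsum]
    rw [← B.mulVecLin_apply, map_sum]
    simp [Matrix.mulVecLin_apply]
  calc Real.sqrt ((B *ᵥ γ) ⬝ᵥ (B *ᵥ γ))
      = ‖(WithLp.equiv 2 (Fin d → ℝ)).symm (B *ᵥ γ)‖ := sqrt_dot_eq_norm _
    _ = ‖∑ u, γ u • (WithLp.equiv 2 (Fin d → ℝ)).symm (B *ᵥ Pi.single u 1)‖ := by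
        rw [hBsum]; congr 1
        simp [WithLp.equiv_symm_apply, WithLp.toLp_sum]
    _ ≤ ∑ u, ‖γ u • (WithLp.equiv 2 (Fin d → ℝ)).symm (B *ᵥ Pi.single u 1)‖ :=
        norm_sum_le _ _
    _ = ∑ u, γ u * Real.sqrt ((B *ᵥ Pi.single u 1) ⬝ᵥ (B *ᵥ Pi.single u 1)) := by
        refine Finset.sum_congr rfl fun u _ => ?_
        rw [norm_smul, Real.norm_eq_abs, abs_of_nonneg (hγ u), sqrt_dot_eq_norm]

/-- If all coordinates of `τ` are negative, the maximum of
`f(β) = βᵀτ/(βᵀΣβ)^{1/2}` over `{β ≥ 0, ‖β‖ = 1}` is attained at the Cartesian unit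
vector `e_{u*}`, where `u* = argmax_u τ_u/√Σ_{uu}`, with value `τ_{u*}/√Σ_{u*u*}`. -/
theorem stmt_5 {d : ℕ} (S : Matrix (Fin d) (Fin d) ℝ) (hS : S.PosDef) (τ : Fin d → ℝ)
    (hτ : ∀ u, τ u < 0) (u0 : Fin d)
    (hu0 : ∀ u, τ u / Real.sqrt (S u u) ≤ τ u0 / Real.sqrt (S u0 u0)) :
    (∀ i, 0 ≤ (Pi.single u0 1 : Fin d → ℝ) i) ∧
    Real.sqrt ((Pi.single u0 1 : Fin d → ℝ) ⬝ᵥ (Pi.single u0 1 : Fin d → ℝ)) = 1 ∧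
    ((Pi.single u0 1 : Fin d → ℝ) ⬝ᵥ τ) /
        Real.sqrt ((Pi.single u0 1 : Fin d → ℝ) ⬝ᵥ (S *ᵥ (Pi.single u0 1 : Fin d → ℝ))) =
      τ u0 / Real.sqrt (S u0 u0) ∧
    (∀ γ : Fin d → ℝ, (∀ i, 0 ≤ γ i) → Real.sqrt (γ ⬝ᵥ γ) = 1 →
      (γ ⬝ᵥ τ) / Real.sqrt (γ ⬝ᵥ (S *ᵥ γ)) ≤ τ u0 / Real.sqrt (S u0 u0)) := by
  -- diagonal entries are positive
  have hdiag : ∀ u : Fin d, 0 < S u u := by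
    intro u
    exact hS.diag_pos
  have hsqrt : ∀ u : Fin d, 0 < Real.sqrt (S u u) := fun u =>
    Real.sqrt_pos.mpr (hdiag u)
  set c : ℝ := τ u0 / Real.sqrt (S u0 u0) with hc
  have hcneg : c < 0 := div_neg_of_neg_of_pos (hτ u0) (hsqrt u0)
  -- components at e_{u0}
  refine ⟨fun i => by by_cases h : i = u0 <;> simp [Pi.single_apply, h], ?_, ?_, ?_⟩
  · simp [single_dotProduct, Pi.single_apply]
  · simp [single_dotProduct, Matrix.mulVec_single, Pi.single_apply, hc]
  · intro γ hγ hγ1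
    have hγne : γ ≠ 0 := by
      intro h
      rw [h] at hγ1
      simp at hγ1
    have hq : 0 < γ ⬝ᵥ (S *ᵥ γ) := by
      have := hS.dotProduct_mulVec_pos hγne
      simpa using this
    have hqs : 0 < Real.sqrt (γ ⬝ᵥ (S *ᵥ γ)) := Real.sqrt_pos.mpr hq
    -- write S = Bᵀ B
    obtain ⟨B, hB⟩ : ∃ B : Matrix (Fin d) (Fin d) ℝ, S = Bᴴ * B := by
      open scoped MatrixOrder in
      obtain ⟨X, hX, -, hXS⟩ := CFC.exists_sqrt_of_isSelfAdjoint_of_quasispectrumRestricts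
        hS.posSemidef.isHermitian (QuasispectrumRestricts.nnreal_of_nonneg hS.posSemidef.nonneg)
      exact ⟨X, by rw [← hXS]; exact congrArg (· * X) hX.star_eq.symm⟩
    have hquad : ∀ v : Fin d → ℝ, v ⬝ᵥ (S *ᵥ v) = (B *ᵥ v) ⬝ᵥ (B *ᵥ v) := by
      intro v
      rw [hB]
      rw [← Matrix.mulVec_mulVec, Matrix.dotProduct_mulVec, Matrix.vecMul_conjTranspose]
      simp
    have hSuu : ∀ u : Fin d, S u u = (B *ᵥ Pi.single u 1) ⬝ᵥ (B *ᵥ Pi.single u 1) := by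
      intro u
      have := hquad (Pi.single u 1)
      simpa [single_dotProduct, Matrix.mulVec_single] using this
    -- key triangle inequality: √(γᵀSγ) ≤ ∑ γ_u √(S_uu)
    have hkey : Real.sqrt (γ ⬝ᵥ (S *ᵥ γ)) ≤ ∑ u, γ u * Real.sqrt (S u u) := by
      rw [hquad]
      calc Real.sqrt ((B *ᵥ γ) ⬝ᵥ (B *ᵥ γ))
          ≤ ∑ u, γ u * Real.sqrt ((B *ᵥ Pi.single u 1) ⬝ᵥ (B *ᵥ Pi.single u 1)) :=
            triangle_key B γ hγ
        _ = ∑ u, γ u * Real.sqrt (S u u) := by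
            refine Finset.sum_congr rfl fun u _ => ?_
            rw [hSuu u]
    -- γᵀτ ≤ c * ∑ γ_u √(S_uu)
    have hτle : ∀ u : Fin d, τ u ≤ c * Real.sqrt (S u u) := by
      intro u
      have h := hu0 u
      rw [div_le_div_iff₀ (hsqrt u) (hsqrt u0)] at h
      rw [hc, div_mul_eq_mul_div, le_div_iff₀ (hsqrt u0)]
      linarith
    have hdot : γ ⬝ᵥ τ ≤ c * ∑ u, γ u * Real.sqrt (S u u) := by
      rw [Finset.mul_sum]
      refine Finset.sum_le_sum fun u _ => ?_
      calc γ u * τ u ≤ γ u * (c * Real.sqrt (S u u)) :=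
            mul_le_mul_of_nonneg_left (hτle u) (hγ u)
        _ = c * (γ u * Real.sqrt (S u u)) := by ring
    rw [div_le_iff₀ hqs]
    calc γ ⬝ᵥ τ ≤ c * ∑ u, γ u * Real.sqrt (S u u) := hdot
      _ ≤ c * Real.sqrt (γ ⬝ᵥ (S *ᵥ γ)) :=
          mul_le_mul_of_nonpos_left hkey (le_of_lt hcneg)
end
end

section
/- Let Σ be symmetric positive definite, τ ∈ ℝ^d, β* a maximizer of f(β) = βᵀτ/(βᵀΣβ)^{1/2} over {β ≥ 0, ‖β‖ = 1}, and suppose β* has at least two nonzero coordinates. Then β*ᵀτ ≥ 0. -/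
open Matrix

noncomputable section

/-- If `β*` maximizes `f(β) = βᵀτ/(βᵀΣβ)^{1/2}` over the nonnegative
Euclidean unit sphere and has at least two nonzero coordinates, then `β*ᵀτ ≥ 0`. -/
theorem stmt_7 {d : ℕ} (S : Matrix (Fin d) (Fin d) ℝ) (hS : S.PosDef) (τ : Fin d → ℝ)
    (β : Fin d → ℝ) (hβnn : ∀ i, 0 ≤ β i) (hβnorm : Real.sqrt (β ⬝ᵥ β) = 1)
    (hmax : ∀ γ : Fin d → ℝ, (∀ i, 0 ≤ γ i) → Real.sqrt (γ ⬝ᵥ γ) = 1 →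
      (γ ⬝ᵥ τ) / Real.sqrt (γ ⬝ᵥ (S *ᵥ γ)) ≤ (β ⬝ᵥ τ) / Real.sqrt (β ⬝ᵥ (S *ᵥ β)))
    (htwo : ∃ u v : Fin d, u ≠ v ∧ β u ≠ 0 ∧ β v ≠ 0) :
    0 ≤ β ⬝ᵥ τ := by
  by_contra hcon
  push_neg at hcon
  obtain ⟨u, v, huv, hu, hv⟩ := htwo
  have hpd : ∀ x : Fin d → ℝ, x ≠ 0 → 0 < x ⬝ᵥ (S *ᵥ x) := fun x hx => by
    simpa using hS.dotProduct_mulVec_pos hx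
  have hβ0 : β ≠ 0 := by
    intro h; rw [h] at hβnorm; simp at hβnorm
  have hqβ : 0 < β ⬝ᵥ (S *ᵥ β) := hpd β hβ0
  have hsqβ : 0 < Real.sqrt (β ⬝ᵥ (S *ᵥ β)) := Real.sqrt_pos.mpr hqβ
  have hfβ : (β ⬝ᵥ τ) / Real.sqrt (β ⬝ᵥ (S *ᵥ β)) < 0 := div_neg_of_neg_of_pos hcon hsqβ
  -- all coordinates of τ are negative
  have hτ : ∀ i, τ i < 0 := by
    intro i
    have hnn : ∀ j, 0 ≤ (Pi.single i 1 : Fin d → ℝ) j := by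
      intro j; simp only [Pi.single_apply]; split <;> norm_num
    have hnorm : Real.sqrt ((Pi.single i 1 : Fin d → ℝ) ⬝ᵥ Pi.single i 1) = 1 := by
      simp [dotProduct, Pi.single_apply]
    have h1 := hmax _ hnn hnorm
    rw [single_dotProduct, one_mul] at h1
    by_contra hτi
    push_neg at hτi
    exact absurd (lt_of_le_of_lt h1 hfβ)
      (not_lt.mpr (div_nonneg hτi (Real.sqrt_nonneg _)))
  have hβu : 0 < β u := lt_of_le_of_ne (hβnn u) (Ne.symm hu)
  have hβv : 0 < β v := lt_of_le_of_ne (hβnn v) (Ne.symm hv)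
  have hcu : 0 < -τ u := by linarith [hτ u]
  have hcv : 0 < -τ v := by linarith [hτ v]
  -- perturbation direction
  set w : Fin d → ℝ := (-τ u)⁻¹ • (Pi.single u 1 : Fin d → ℝ) - (-τ v)⁻¹ • (Pi.single v 1 : Fin d → ℝ) with hw
  have hwτ : w ⬝ᵥ τ = 0 := by
    rw [hw, sub_dotProduct, smul_dotProduct, smul_dotProduct, single_dotProduct,
      single_dotProduct]
    field_simp [(hτ u).ne, (hτ v).ne]
    simp [smul_eq_mul, (hτ u).ne, (hτ v).ne]
  have hwu : w u = (-τ u)⁻¹ := by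
    simp [hw, Pi.single_apply, huv.symm]
  have hw0 : w ≠ 0 := by
    intro h
    have : w u = 0 := by rw [h]; rfl
    rw [hwu] at this
    exact (inv_ne_zero (ne_of_gt hcu)) this
  have ha : 0 < w ⬝ᵥ (S *ᵥ w) := hpd w hw0
  set q0 : ℝ := β ⬝ᵥ (S *ᵥ β) with hq0
  set b : ℝ := w ⬝ᵥ (S *ᵥ β) + β ⬝ᵥ (S *ᵥ w) with hb
  set a : ℝ := w ⬝ᵥ (S *ᵥ w) with hA
  have hQ : ∀ t : ℝ, (β + t • w) ⬝ᵥ (S *ᵥ (β + t • w)) = q0 + t * b + t ^ 2 * a := by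
    intro t
    simp only [mulVec_add, mulVec_smul, dotProduct_add, add_dotProduct,
      dotProduct_smul, smul_dotProduct, smul_eq_mul, hq0, hb, hA]
    ring
  set ε : ℝ := min (β u * (-τ u)) (β v * (-τ v)) with hε
  have hεpos : 0 < ε := lt_min (mul_pos hβu hcu) (mul_pos hβv hcv)
  -- nonnegativity of the perturbed vector
  have key : ∀ t : ℝ, |t| ≤ ε → ∀ i, 0 ≤ (β + t • w) i := by
    intro t ht i
    have ht1 : -(β u * (-τ u)) ≤ t := by
      have := abs_le.mp ht
      have := min_le_left (β u * (-τ u)) (β v * (-τ v))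
      linarith
    have ht2 : t ≤ β v * (-τ v) := by
      have := abs_le.mp ht
      have := min_le_right (β u * (-τ u)) (β v * (-τ v))
      linarith
    have hwi : (β + t • w) i = β i + t * w i := by simp [smul_eq_mul]
    rw [hwi]
    rcases eq_or_ne i u with rfl | hiu
    · rw [hwu]
      have heq : β i + t * (-τ i)⁻¹ = (β i * (-τ i) + t) * (-τ i)⁻¹ := by
        field_simp [(hτ i).ne]
        ring
      rw [heq]
      exact mul_nonneg (by linarith) (inv_nonneg.mpr hcu.le)
    · rcases eq_or_ne i v with rfl | hiv
      · have hwv : w i = -(-τ i)⁻¹ := by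
          simp [hw, Pi.single_apply, huv, hiu]
        rw [hwv]
        have heq : β i + t * -(-τ i)⁻¹ = (β i * (-τ i) - t) * (-τ i)⁻¹ := by
          field_simp [(hτ i).ne]
          ring
        rw [heq]
        exact mul_nonneg (by linarith) (inv_nonneg.mpr hcv.le)
      · have hwz : w i = 0 := by simp [hw, Pi.single_apply, hiu, hiv]
        rw [hwz]
        simpa using hβnn i
  -- choose the sign of the perturbation making the quadratic form increase
  obtain ⟨t, htabs, hQt⟩ : ∃ t : ℝ, |t| ≤ ε ∧ q0 < q0 + t * b + t ^ 2 * a := by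
    rcases le_or_gt 0 b with hb0 | hb0
    · exact ⟨ε, le_of_eq (abs_of_pos hεpos),
        by nlinarith [mul_nonneg hεpos.le hb0, mul_pos (mul_pos hεpos hεpos) ha]⟩
    · refine ⟨-ε, by rw [abs_neg]; exact le_of_eq (abs_of_pos hεpos), ?_⟩
      nlinarith [mul_pos hεpos (neg_pos.mpr hb0), mul_pos (mul_pos hεpos hεpos) ha]
  set δ : Fin d → ℝ := β + t • w with hδ
  have hδnn : ∀ i, 0 ≤ δ i := key t htabs
  have hQδ : q0 < δ ⬝ᵥ (S *ᵥ δ) := by rw [hδ, hQ t]; exact hQt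
  have hδS : 0 < δ ⬝ᵥ (S *ᵥ δ) := lt_trans hqβ hQδ
  have hδ0 : δ ≠ 0 := by
    intro h; rw [h] at hδS; simp at hδS
  have hδδ : 0 < δ ⬝ᵥ δ := by
    have h1 : 0 ≤ δ ⬝ᵥ δ := Finset.sum_nonneg fun i _ => mul_self_nonneg (δ i)
    have h2 : δ ⬝ᵥ δ ≠ 0 := fun h => hδ0 (dotProduct_self_eq_zero.mp h)
    exact h1.lt_of_ne (Ne.symm h2)
  have hδτ : δ ⬝ᵥ τ = β ⬝ᵥ τ := by
    rw [hδ, add_dotProduct, smul_dotProduct, hwτ, smul_zero, add_zero]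
  set n : ℝ := Real.sqrt (δ ⬝ᵥ δ) with hn
  have hnpos : 0 < n := Real.sqrt_pos.mpr hδδ
  have hn2 : n * n = δ ⬝ᵥ δ := Real.mul_self_sqrt hδδ.le
  set γ' : Fin d → ℝ := n⁻¹ • δ with hγ'
  have hγnn : ∀ i, 0 ≤ γ' i := by
    intro i
    simp only [hγ', Pi.smul_apply, smul_eq_mul]
    exact mul_nonneg (inv_nonneg.mpr hnpos.le) (hδnn i)
  have hγdot : γ' ⬝ᵥ γ' = 1 := by
    rw [hγ', smul_dotProduct, dotProduct_smul, smul_eq_mul, smul_eq_mul, ← hn2]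
    field_simp
  have hγnorm : Real.sqrt (γ' ⬝ᵥ γ') = 1 := by rw [hγdot, Real.sqrt_one]
  have hγτ : γ' ⬝ᵥ τ = n⁻¹ * (β ⬝ᵥ τ) := by
    rw [hγ', smul_dotProduct, smul_eq_mul, hδτ]
  have hγS : γ' ⬝ᵥ (S *ᵥ γ') = (n⁻¹) ^ 2 * (δ ⬝ᵥ (S *ᵥ δ)) := by
    rw [hγ', mulVec_smul, smul_dotProduct, dotProduct_smul, smul_eq_mul, smul_eq_mul]
    ring
  have hsqγ : Real.sqrt (γ' ⬝ᵥ (S *ᵥ γ')) = n⁻¹ * Real.sqrt (δ ⬝ᵥ (S *ᵥ δ)) := by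
    rw [hγS, Real.sqrt_mul (sq_nonneg _), Real.sqrt_sq (inv_nonneg.mpr hnpos.le)]
  have hmaxγ := hmax γ' hγnn hγnorm
  rw [hγτ, hsqγ, mul_div_mul_left _ _ (inv_ne_zero hnpos.ne')] at hmaxγ
  -- contradiction: the quadratic form grew, so f strictly increased
  have hsqδ : 0 < Real.sqrt (δ ⬝ᵥ (S *ᵥ δ)) := Real.sqrt_pos.mpr hδS
  have hsqlt : Real.sqrt (β ⬝ᵥ (S *ᵥ β)) < Real.sqrt (δ ⬝ᵥ (S *ᵥ δ)) :=
    Real.sqrt_lt_sqrt hqβ.le hQδ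
  rw [div_le_div_iff₀ hsqδ hsqβ] at hmaxγ
  nlinarith [hmaxγ, hcon, hsqβ, hsqδ, hsqlt]
end
end

section
/- Let τ ~ N(0, Σ) with Σ symmetric positive definite, let U ⊆ {1,…,d} be a nonempty index set, Π the orthogonal projector onto the coordinates in U, Σ̄ the Moore–Penrose pseudoinverse of ΠΣΠ, X̃ := Σ̄^{1/2}τ and z := τ − ΣΣ̄τ. Then X̃ and z are independent Gaussian vectors. -/
open Matrix MeasureTheory ProbabilityTheory
open scoped ENNReal

noncomputable section

/-- The standard Gaussian measure `N(0, I_n)` on `ℝ^n`. -/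
def stdGaussian (n : ℕ) : Measure (Fin n → ℝ) :=
  Measure.pi fun _ => gaussianReal 0 1

open scoped ComplexOrder in
def Matrix.PosSemidef.sqrt {n 𝕜 : Type*} [Fintype n] [DecidableEq n] [RCLike 𝕜]
    {A : Matrix n n 𝕜} (hA : A.PosSemidef) : Matrix n n 𝕜 :=
  hA.1.eigenvectorUnitary.1 * diagonal ((↑) ∘ (√·) ∘ hA.1.eigenvalues) *
  (star hA.1.eigenvectorUnitary : Matrix n n 𝕜)

open scoped ComplexOrder in
lemma Matrix.PosSemidef.sqrt_mul_self {n 𝕜 : Type*} [Fintype n] [DecidableEq n] [RCLike 𝕜]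
    {A : Matrix n n 𝕜} (hA : A.PosSemidef) : hA.sqrt * hA.sqrt = A := by
  have hU : (star hA.1.eigenvectorUnitary : Matrix n n 𝕜) * hA.1.eigenvectorUnitary.1 = 1 :=
    Unitary.coe_star_mul_self _
  have hD : diagonal ((↑) ∘ (√·) ∘ hA.1.eigenvalues) * diagonal ((↑) ∘ (√·) ∘ hA.1.eigenvalues)
      = diagonal (RCLike.ofReal ∘ hA.1.eigenvalues : n → 𝕜) := by
    rw [diagonal_mul_diagonal]
    congr 1; funext i
    simp only [Function.comp_apply]
    rw [← RCLike.ofReal_mul, Real.mul_self_sqrt (hA.eigenvalues_nonneg i)]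
  conv_rhs => rw [hA.1.spectral_theorem, Unitary.conjStarAlgAut_apply]
  unfold Matrix.PosSemidef.sqrt
  simp only [Matrix.mul_assoc]
  rw [← Matrix.mul_assoc _ (hA.1.eigenvectorUnitary.1), hU, Matrix.one_mul,
    ← Matrix.mul_assoc (diagonal _) (diagonal _), hD]

open scoped ComplexOrder in
lemma Matrix.PosSemidef.posSemidef_sqrt {n 𝕜 : Type*} [Fintype n] [DecidableEq n] [RCLike 𝕜]
    {A : Matrix n n 𝕜} (hA : A.PosSemidef) : hA.sqrt.PosSemidef := by
  have hd : (diagonal ((↑) ∘ (√·) ∘ hA.1.eigenvalues) : Matrix n n 𝕜).PosSemidef := by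
    rw [posSemidef_diagonal_iff]
    intro i
    simp [Real.sqrt_nonneg]
  have := hd.mul_mul_conjTranspose_same (hA.1.eigenvectorUnitary.1)
  unfold Matrix.PosSemidef.sqrt
  rwa [star_eq_conjTranspose]

namespace StdGaussianAux

variable {ι : Type*} [Fintype ι]

lemma measurable_mulVec {κ : Type*} [Fintype κ] (M : Matrix κ ι ℝ) :
    Measurable fun x : ι → ℝ => M *ᵥ x := by
  refine measurable_pi_lambda _ fun i => ?_
  simp only [Matrix.mulVec, dotProduct]
  exact Finset.measurable_sum _ fun j _ => (measurable_pi_apply j).const_mul _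

lemma lintegral_fin_prod {μ : Measure ℝ} [SigmaFinite μ] :
    ∀ (n : ℕ) (f : Fin n → ℝ → ℝ≥0∞), (∀ i, Measurable (f i)) →
    ∫⁻ x : Fin n → ℝ, ∏ i, f i (x i) ∂(Measure.pi fun _ => μ) = ∏ i, ∫⁻ y, f i y ∂μ := by
  intro n
  induction n with
  | zero =>
    intro f hf
    simp only [Finset.univ_eq_empty, Finset.prod_empty, lintegral_one]
    rw [← Set.pi_univ (Set.univ : Set (Fin 0)), Measure.pi_pi]
    simp
  | succ n ih =>
    intro f hf
    have hg : Measurable fun x : Fin (n+1) → ℝ => ∏ i, f i (x i) :=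
      Finset.measurable_prod _ fun i _ => (hf i).comp (measurable_pi_apply i)
    rw [← ((measurePreserving_piFinSuccAbove (fun _ : Fin (n+1) => μ) 0).symm).lintegral_comp hg]
    have hrw : ∀ a : ℝ × (Fin n → ℝ), ∀ i,
        (MeasurableEquiv.piFinSuccAbove (fun _ : Fin (n+1) => ℝ) 0).symm a i
          = (Fin.cons a.1 a.2 : Fin (n+1) → ℝ) i := by
      intro a i
      simp [MeasurableEquiv.piFinSuccAbove, Fin.insertNthEquiv, Fin.insertNth_zero]
    simp_rw [hrw, Fin.prod_univ_succ, Fin.cons_zero, Fin.cons_succ]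
    rw [lintegral_prod_mul (f := f 0) (g := fun y : Fin n → ℝ => ∏ x : Fin n, f x.succ (y x))
      (hf 0).aemeasurable
      (Finset.measurable_prod _ fun i _ =>
        ((hf i.succ).comp (measurable_pi_apply i))).aemeasurable,
      ih _ (fun i => hf i.succ)]

lemma lintegral_pi_prod {μ : Measure ℝ} [SigmaFinite μ] (f : ι → ℝ → ℝ≥0∞)
    (hf : ∀ i, Measurable (f i)) :
    ∫⁻ x : ι → ℝ, ∏ i, f i (x i) ∂(Measure.pi fun _ => μ) = ∏ i, ∫⁻ y, f i y ∂μ := by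
  have hg : Measurable fun x : ι → ℝ => ∏ i, f i (x i) :=
    Finset.measurable_prod _ fun i _ => (hf i).comp (measurable_pi_apply i)
  let e := (Fintype.equivFin ι).symm
  rw [← (measurePreserving_piCongrLeft (fun _ : ι => μ) e).lintegral_comp hg]
  simp_rw [MeasurableEquiv.coe_piCongrLeft, ← e.prod_comp, Equiv.piCongrLeft_apply_apply]
  rw [lintegral_fin_prod _ _ (fun i => hf (e i))]

lemma pi_withDensity (μ : Measure ℝ) [SigmaFinite μ] (f : ι → ℝ → ℝ≥0∞)
    (hf : ∀ i, Measurable (f i)) (hσ : ∀ i, SigmaFinite (μ.withDensity (f i))) :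
    Measure.pi (fun i => μ.withDensity (f i))
      = (Measure.pi fun _ : ι => μ).withDensity fun x => ∏ i, f i (x i) := by
  haveI := hσ
  apply Measure.pi_eq
  intro s hs
  rw [withDensity_apply _ (MeasurableSet.univ_pi hs)]
  have hind : ∀ x : ι → ℝ, (Set.univ.pi s).indicator (fun x => ∏ i, f i (x i)) x
      = ∏ i, (s i).indicator (f i) (x i) := by
    intro x
    by_cases hx : x ∈ Set.univ.pi s
    · rw [Set.indicator_of_mem hx]
      exact Finset.prod_congr rfl fun i _ =>
        (Set.indicator_of_mem (hx i (Set.mem_univ i)) _).symm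
    · rw [Set.indicator_of_notMem hx]
      rw [Set.mem_univ_pi] at hx
      push_neg at hx
      obtain ⟨i, hi⟩ := hx
      exact (Finset.prod_eq_zero (Finset.mem_univ i) (Set.indicator_of_notMem hi _)).symm
  rw [← lintegral_indicator (MeasurableSet.univ_pi hs)]
  simp_rw [hind]
  rw [lintegral_pi_prod _ (fun i => (hf i).indicator (hs i))]
  exact Finset.prod_congr rfl fun i _ => by
    rw [lintegral_indicator (hs i), ← withDensity_apply _ (hs i)]

lemma stdGaussianPi_eq :
    (Measure.pi fun _ : ι => gaussianReal 0 1)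
      = (volume : Measure (ι → ℝ)).withDensity fun x => ∏ i, gaussianPDF 0 1 (x i) := by
  have h1 : (gaussianReal 0 1) = volume.withDensity (gaussianPDF 0 1) :=
    gaussianReal_of_var_ne_zero 0 one_ne_zero
  calc (Measure.pi fun _ : ι => gaussianReal 0 1)
      = Measure.pi fun _ : ι => volume.withDensity (gaussianPDF 0 1) := by rw [← h1]
    _ = (Measure.pi fun _ : ι => (volume : Measure ℝ)).withDensity
          fun x => ∏ i, gaussianPDF 0 1 (x i) :=
        pi_withDensity _ _ (fun _ => measurable_gaussianPDF 0 1)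
          (fun _ => by rw [← h1]; infer_instance)
    _ = (volume : Measure (ι → ℝ)).withDensity fun x => ∏ i, gaussianPDF 0 1 (x i) := by
        rw [← volume_pi]

lemma sum_sq_mulVec [DecidableEq ι] {Q : Matrix ι ι ℝ} (hQ : Q * Qᵀ = 1) (x : ι → ℝ) :
    ∑ i, (Q *ᵥ x) i ^ 2 = ∑ i, x i ^ 2 := by
  have h1 : ∀ v : ι → ℝ, ∑ i, v i ^ 2 = v ⬝ᵥ v :=
    fun v => Finset.sum_congr rfl fun i _ => sq (v i)
  have hQ' : Qᵀ * Q = 1 := mul_eq_one_comm.mp hQ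
  rw [h1, h1]
  have hvm : (Q *ᵥ x) ᵥ* Q = x := by
    have := vecMul_transpose Qᵀ (Q *ᵥ x)
    rw [transpose_transpose] at this
    rw [this, mulVec_mulVec, hQ', one_mulVec]
  rw [dotProduct_mulVec, hvm]

lemma prod_gaussianPDF_eq (v : ι → ℝ) :
    ∏ i, gaussianPDF 0 1 (v i)
      = ENNReal.ofReal ((Real.sqrt (2 * Real.pi))⁻¹ ^ (Fintype.card ι)
          * Real.exp (-(∑ i, v i ^ 2) / 2)) := by
  simp only [gaussianPDF]
  rw [← ENNReal.ofReal_prod_of_nonneg (fun i _ => gaussianPDFReal_nonneg 0 1 (v i))]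
  congr 1
  simp only [gaussianPDFReal, NNReal.coe_one, mul_one, sub_zero]
  rw [Finset.prod_mul_distrib, Finset.prod_const, Finset.card_univ, ← Real.exp_sum,
    ← Finset.sum_neg_distrib, Finset.sum_div]

lemma gaussianPi_map_rotation [DecidableEq ι] {Q : Matrix ι ι ℝ} (hQ : Q * Qᵀ = 1) :
    (Measure.pi fun _ : ι => gaussianReal 0 1).map (Q.mulVec)
      = Measure.pi fun _ : ι => gaussianReal 0 1 := by
  have hdet2 : Q.det * Q.det = 1 := by
    have := congrArg Matrix.det hQ
    rwa [det_mul, det_transpose, det_one] at this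
  have hdet : Q.det ≠ 0 := by
    intro h; rw [h, mul_zero] at hdet2; exact zero_ne_one hdet2
  have habs : |Q.det| = 1 := by
    rcases mul_self_eq_one_iff.mp hdet2 with h | h <;> simp [h]
  set φ : (ι → ℝ) → ℝ≥0∞ := fun x => ∏ i, gaussianPDF 0 1 (x i) with hφ
  have hφm : Measurable φ :=
    Finset.measurable_prod _ fun i _ =>
      (measurable_gaussianPDF 0 1).comp (measurable_pi_apply i)
  have hφinv : ∀ x, φ (Q *ᵥ x) = φ x := by
    intro x
    rw [hφ]
    simp only
    rw [prod_gaussianPDF_eq, prod_gaussianPDF_eq, sum_sq_mulVec hQ]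
  have hvol : (volume : Measure (ι → ℝ)).map (Q.mulVec) = volume := by
    have hcoe : (Matrix.toLin' Q : (ι → ℝ) → ι → ℝ) = Q.mulVec :=
      funext fun v => Matrix.toLin'_apply Q v
    have := Real.map_matrix_volume_pi_eq_smul_volume_pi hdet
    rw [hcoe] at this
    rw [this, abs_inv, habs]
    simp
  rw [stdGaussianPi_eq, ← hφ]
  ext A hA
  rw [Measure.map_apply (measurable_mulVec Q) hA,
    withDensity_apply _ ((measurable_mulVec Q) hA),
    withDensity_apply _ hA]
  conv_rhs => rw [← hvol]
  rw [setLIntegral_map hA hφm (measurable_mulVec Q)]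
  exact setLIntegral_congr_fun ((measurable_mulVec Q) hA)
    (fun x _ => (hφinv x).symm)

lemma gaussianPi_map_inl (d : ℕ) :
    (Measure.pi fun _ : Fin d ⊕ Fin d => gaussianReal 0 1).map (fun w => w ∘ Sum.inl)
      = Measure.pi fun _ : Fin d => gaussianReal 0 1 := by
  have hme := measurePreserving_sumPiEquivProdPi
    (X := fun _ : Fin d ⊕ Fin d => ℝ) (fun _ => gaussianReal 0 1)
  have h1 : (fun w : (Fin d ⊕ Fin d) → ℝ => w ∘ Sum.inl)
      = Prod.fst ∘ (MeasurableEquiv.sumPiEquivProdPi (fun _ : Fin d ⊕ Fin d => ℝ)) := rfl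
  rw [h1, ← Measure.map_map measurable_fst (MeasurableEquiv.measurable _), hme.map_eq,
    Measure.map_fst_prod]
  simp

lemma measurable_compInl (d : ℕ) :
    Measurable fun w : (Fin d ⊕ Fin d) → ℝ => w ∘ Sum.inl :=
  measurable_pi_lambda _ fun i => measurable_pi_apply _

lemma indep_mulVec {d : ℕ} (A' B' K : Matrix (Fin d) (Fin d) ℝ)
    (hKsym : Kᵀ = K) (hKK : K * K = K)
    (hA'K : A' * K = A') (hB'K : B' * K = 0) :
    IndepFun (fun x => A' *ᵥ x) (fun x => B' *ᵥ x)
      (Measure.pi fun _ : Fin d => gaussianReal 0 1) := by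
  classical
  set μd := Measure.pi fun _ : Fin d => gaussianReal 0 1 with hμd
  set μπ := Measure.pi fun _ : Fin d ⊕ Fin d => gaussianReal 0 1 with hμπ
  set Q : Matrix (Fin d ⊕ Fin d) (Fin d ⊕ Fin d) ℝ :=
    Matrix.fromBlocks K (1 - K) (1 - K) K with hQdef
  have hK1 : K * (1 - K) = 0 := by rw [mul_sub, mul_one, hKK, sub_self]
  have hK1' : (1 - K) * K = 0 := by rw [sub_mul, one_mul, hKK, sub_self]
  have hK2 : (1 - K) * (1 - K) = 1 - K := by rw [sub_mul, one_mul, hK1, sub_zero]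
  have hQt : Qᵀ = Q := by
    rw [hQdef, fromBlocks_transpose, hKsym, transpose_sub, transpose_one, hKsym]
  have hQ : Q * Qᵀ = 1 := by
    rw [hQt, hQdef, fromBlocks_multiply, hKK, hK1, hK1', hK2]
    rw [add_zero, add_sub_cancel, sub_add_cancel, ← Matrix.fromBlocks_one]
  have hF : ∀ w : (Fin d ⊕ Fin d) → ℝ,
      (Q *ᵥ w) ∘ Sum.inl = K *ᵥ (w ∘ Sum.inl) + (1 - K) *ᵥ (w ∘ Sum.inr) := by
    intro w
    funext i
    simp [hQdef, Matrix.mulVec, dotProduct, Fintype.sum_sum_type]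
  have key : μπ.map (fun w => (Q *ᵥ w) ∘ Sum.inl) = μd := by
    have h2 : (fun w : (Fin d ⊕ Fin d) → ℝ => (Q *ᵥ w) ∘ Sum.inl)
        = (fun w => w ∘ Sum.inl) ∘ (Q.mulVec) := rfl
    rw [h2, ← Measure.map_map (measurable_compInl d) (measurable_mulVec Q),
      hμπ, gaussianPi_map_rotation hQ, gaussianPi_map_inl]
  have hA'F : ∀ w : (Fin d ⊕ Fin d) → ℝ,
      A' *ᵥ ((Q *ᵥ w) ∘ Sum.inl) = A' *ᵥ (w ∘ Sum.inl) := by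
    intro w
    rw [hF, mulVec_add, mulVec_mulVec, mulVec_mulVec, hA'K, mul_sub, mul_one, hA'K,
      sub_self, zero_mulVec, add_zero]
  have hB'F : ∀ w : (Fin d ⊕ Fin d) → ℝ,
      B' *ᵥ ((Q *ᵥ w) ∘ Sum.inl) = B' *ᵥ (w ∘ Sum.inr) := by
    intro w
    rw [hF, mulVec_add, mulVec_mulVec, mulVec_mulVec, hB'K, mul_sub, mul_one, hB'K,
      sub_zero, zero_mulVec, zero_add]
  rw [indepFun_iff_measure_inter_preimage_eq_mul]
  intro s t hs ht
  have hsA : MeasurableSet ((fun x : Fin d → ℝ => A' *ᵥ x) ⁻¹' s) := measurable_mulVec A' hs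
  have htB : MeasurableSet ((fun x : Fin d → ℝ => B' *ᵥ x) ⁻¹' t) := measurable_mulVec B' ht
  have hme := measurePreserving_sumPiEquivProdPi
    (X := fun _ : Fin d ⊕ Fin d => ℝ) (fun _ => gaussianReal 0 1)
  have hFmeas : Measurable fun w : (Fin d ⊕ Fin d) → ℝ => (Q *ᵥ w) ∘ Sum.inl :=
    (measurable_compInl d).comp (measurable_mulVec Q)
  have hset : (fun w : (Fin d ⊕ Fin d) → ℝ => (Q *ᵥ w) ∘ Sum.inl) ⁻¹'
        ((fun x => A' *ᵥ x) ⁻¹' s ∩ (fun x => B' *ᵥ x) ⁻¹' t)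
      = (MeasurableEquiv.sumPiEquivProdPi (fun _ : Fin d ⊕ Fin d => ℝ)) ⁻¹'
        (((fun x : Fin d → ℝ => A' *ᵥ x) ⁻¹' s) ×ˢ ((fun x : Fin d → ℝ => B' *ᵥ x) ⁻¹' t)) := by
    ext w
    simp only [Set.mem_preimage, Set.mem_inter_iff, Set.mem_prod]
    rw [hA'F w, hB'F w]
    rfl
  calc μd ((fun x => A' *ᵥ x) ⁻¹' s ∩ (fun x => B' *ᵥ x) ⁻¹' t)
      = μπ.map (fun w => (Q *ᵥ w) ∘ Sum.inl)
          ((fun x => A' *ᵥ x) ⁻¹' s ∩ (fun x => B' *ᵥ x) ⁻¹' t) := by rw [key]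
    _ = μπ ((fun w : (Fin d ⊕ Fin d) → ℝ => (Q *ᵥ w) ∘ Sum.inl) ⁻¹'
          ((fun x => A' *ᵥ x) ⁻¹' s ∩ (fun x => B' *ᵥ x) ⁻¹' t)) :=
        Measure.map_apply hFmeas (hsA.inter htB)
    _ = (μd.prod μd) (((fun x : Fin d → ℝ => A' *ᵥ x) ⁻¹' s)
          ×ˢ ((fun x : Fin d → ℝ => B' *ᵥ x) ⁻¹' t)) := by
        rw [hset, ← hme.map_eq, Measure.map_apply (MeasurableEquiv.measurable _)
          (hsA.prod htB)]
    _ = μd ((fun x => A' *ᵥ x) ⁻¹' s) * μd ((fun x => B' *ᵥ x) ⁻¹' t) :=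
        Measure.prod_prod _ _

lemma indepFun_map_of_comp {α γ β β' : Type*} [MeasurableSpace α] [MeasurableSpace γ]
    [MeasurableSpace β] [MeasurableSpace β']
    {μ : Measure α} {h : α → γ} (hh : Measurable h)
    {f : γ → β} {g : γ → β'} (hf : Measurable f) (hg : Measurable g)
    (hind : IndepFun (f ∘ h) (g ∘ h) μ) : IndepFun f g (μ.map h) := by
  rw [indepFun_iff_measure_inter_preimage_eq_mul] at hind ⊢
  intro s t hs ht
  rw [Measure.map_apply hh ((hf hs).inter (hg ht)), Measure.map_apply hh (hf hs),
    Measure.map_apply hh (hg ht)]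
  exact hind s t hs ht

end StdGaussianAux

open StdGaussianAux in
/-- For `τ ~ N(0, Σ)` with `Σ` symmetric positive definite, `U` a nonempty
index set with coordinate projector `P`, and `Sb` the Moore–Penrose pseudoinverse of
`PΣP` (characterized by the four Penrose conditions; it is positive semidefinite),
the vectors `X̃ = Sb^{1/2} τ` and `z = τ − Σ Sb τ` are independent Gaussian vectors. -/
theorem stmt_10 {d : ℕ} (S : Matrix (Fin d) (Fin d) ℝ) (hS : S.PosDef)
    (U : Finset (Fin d)) (hU : U.Nonempty)
    (P : Matrix (Fin d) (Fin d) ℝ)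
    (hP : P = Matrix.diagonal fun i => if i ∈ U then (1 : ℝ) else 0)
    (Sb : Matrix (Fin d) (Fin d) ℝ)
    (hp1 : (P * S * P) * Sb * (P * S * P) = P * S * P)
    (hp2 : Sb * (P * S * P) * Sb = Sb)
    (hp3 : ((P * S * P) * Sb)ᵀ = (P * S * P) * Sb)
    (hp4 : (Sb * (P * S * P))ᵀ = Sb * (P * S * P))
    (hSb : Sb.PosSemidef)
    (N : Measure (Fin d → ℝ))
    (hN : N = (stdGaussian d).map fun x => hS.posSemidef.sqrt *ᵥ x) :
    IndepFun (fun τ => hSb.sqrt *ᵥ τ) (fun τ => τ - S *ᵥ (Sb *ᵥ τ)) N ∧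
    (∃ A : Matrix (Fin d) (Fin d) ℝ,
      N.map (fun τ => hSb.sqrt *ᵥ τ) = (stdGaussian d).map fun x => A *ᵥ x) ∧
    (∃ B : Matrix (Fin d) (Fin d) ℝ,
      N.map (fun τ => τ - S *ᵥ (Sb *ᵥ τ)) = (stdGaussian d).map fun x => B *ᵥ x) := by
  classical
  have hSsym : Sᵀ = S := by
    rw [← conjTranspose_eq_transpose_of_trivial]; exact hS.posSemidef.isHermitian
  have hSbsym : Sbᵀ = Sb := by
    rw [← conjTranspose_eq_transpose_of_trivial]; exact hSb.isHermitian
  set t := hS.posSemidef.sqrt with htdef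
  set sq := hSb.sqrt with hsqdef
  have htt : t * t = S := hS.posSemidef.sqrt_mul_self
  have hss : sq * sq = Sb := hSb.sqrt_mul_self
  have htsym : tᵀ = t := by
    rw [← conjTranspose_eq_transpose_of_trivial]
    exact (hS.posSemidef.posSemidef_sqrt).isHermitian
  have hsqsym : sqᵀ = sq := by
    rw [← conjTranspose_eq_transpose_of_trivial]
    exact (hSb.posSemidef_sqrt).isHermitian
  have hPsym : Pᵀ = P := by rw [hP, diagonal_transpose]
  have hPP : P * P = P := by
    rw [hP, diagonal_mul_diagonal]
    refine congrArg Matrix.diagonal (funext fun i => ?_)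
    by_cases h : i ∈ U <;> simp [h]
  have hPSPsym : (P * S * P)ᵀ = P * S * P := by
    rw [transpose_mul, transpose_mul, hPsym, hSsym, ← Matrix.mul_assoc]
  have hcomm : Sb * (P * S * P) = (P * S * P) * Sb :=
    calc Sb * (P * S * P) = ((P * S * P) * Sb)ᵀ := by
          rw [transpose_mul, hSbsym, hPSPsym]
      _ = (P * S * P) * Sb := hp3
  have hSbP : Sb * P = Sb := by
    have h0 : Sb * Sb * (P * S * P) = Sb := by
      calc Sb * Sb * (P * S * P) = Sb * (Sb * (P * S * P)) := Matrix.mul_assoc _ _ _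
        _ = Sb * ((P * S * P) * Sb) := by rw [hcomm]
        _ = Sb * (P * S * P) * Sb := (Matrix.mul_assoc _ _ _).symm
        _ = Sb := hp2
    calc Sb * P = Sb * Sb * (P * S * P) * P := by rw [h0]
      _ = Sb * Sb * ((P * S * P) * P) := Matrix.mul_assoc _ _ _
      _ = Sb * Sb * (P * S * (P * P)) := by rw [Matrix.mul_assoc (P * S) P P]
      _ = Sb * Sb * (P * S * P) := by rw [hPP]
      _ = Sb := h0
  have hPSb : P * Sb = Sb := by
    have h := congrArg Matrix.transpose hSbP
    rwa [transpose_mul, hSbsym, hPsym] at h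
  have hsqP : sq * P = sq := by
    have hz : (sq * (1 - P))ᴴ * (sq * (1 - P)) = 0 := by
      rw [conjTranspose_eq_transpose_of_trivial, transpose_mul, transpose_sub, transpose_one,
        hPsym, hsqsym, Matrix.mul_assoc, ← Matrix.mul_assoc sq sq, hss,
        sub_mul, one_mul, ← Matrix.mul_assoc, hPSb, sub_self]
    have h1 : sq * (1 - P) = 0 := conjTranspose_mul_self_eq_zero.mp hz
    rw [mul_sub, mul_one, sub_eq_zero] at h1
    exact h1.symm
  have hQpsq : Sb * (P * S * P) * sq = sq := by
    have hz : ((1 - Sb * (P * S * P)) * sq) * ((1 - Sb * (P * S * P)) * sq)ᴴ = 0 := by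
      rw [conjTranspose_eq_transpose_of_trivial, transpose_mul, hsqsym, transpose_sub,
        transpose_one, hp4,
        Matrix.mul_assoc (1 - Sb * (P * S * P)) sq (sq * (1 - Sb * (P * S * P))),
        ← Matrix.mul_assoc sq sq (1 - Sb * (P * S * P)), hss,
        sub_mul (1 : Matrix (Fin d) (Fin d) ℝ) (Sb * (P * S * P))
          (Sb * (1 - Sb * (P * S * P))), one_mul,
        ← Matrix.mul_assoc (Sb * (P * S * P)) Sb (1 - Sb * (P * S * P)), hp2, sub_self]
    have h1 : (1 - Sb * (P * S * P)) * sq = 0 := self_mul_conjTranspose_eq_zero.mp hz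
    rw [sub_mul, one_mul, sub_eq_zero] at h1
    exact h1.symm
  have hSbSSb : Sb * S * Sb = Sb := by
    have h2 : Sb * (P * S * P) * Sb = Sb * S * Sb := by
      simp only [← Matrix.mul_assoc]
      rw [hSbP, Matrix.mul_assoc (Sb * S) P Sb, hPSb]
    rw [← h2]; exact hp2
  have hsqSSb : sq * S * Sb = sq := by
    have h3 : sq * S * Sb = sq * (P * S * P) * Sb := by
      simp only [← Matrix.mul_assoc]
      rw [hsqP, Matrix.mul_assoc (sq * S) P Sb, hPSb]
    have h4 : sq * (P * S * P) * Sb = sq := by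
      have h := congrArg Matrix.transpose hQpsq
      rwa [transpose_mul, transpose_mul, hsqsym, hPSPsym, hSbsym, ← Matrix.mul_assoc] at h
    rw [h3, h4]
  set K := t * Sb * t with hKdef
  have hKsym : Kᵀ = K := by
    rw [hKdef, transpose_mul, transpose_mul, htsym, hSbsym, ← Matrix.mul_assoc]
  have hKK : K * K = K := by
    rw [hKdef]
    simp only [← Matrix.mul_assoc]
    rw [Matrix.mul_assoc (t * Sb) t t, htt,
      Matrix.mul_assoc t Sb S, Matrix.mul_assoc t (Sb * S) Sb, hSbSSb]
  set A' := sq * t with hA'def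
  set B' := (1 - S * Sb) * t with hB'def
  have hA'K : A' * K = A' := by
    rw [hA'def, hKdef]
    simp only [← Matrix.mul_assoc]
    rw [Matrix.mul_assoc sq t t, htt, hsqSSb]
  have hB'K : B' * K = 0 := by
    rw [hB'def, hKdef]
    simp only [← Matrix.mul_assoc]
    rw [Matrix.mul_assoc (1 - S * Sb) t t, htt, sub_mul, one_mul, sub_mul,
      Matrix.mul_assoc S Sb S, Matrix.mul_assoc S (Sb * S) Sb, hSbSSb, sub_self, zero_mul]
  have hge : (fun τ : Fin d → ℝ => τ - S *ᵥ (Sb *ᵥ τ)) = fun τ => (1 - S * Sb) *ᵥ τ := by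
    funext τ; rw [sub_mulVec, one_mulVec, mulVec_mulVec]
  have hcomp1 : ((fun τ : Fin d → ℝ => sq *ᵥ τ) ∘ fun x => t *ᵥ x) = fun x => A' *ᵥ x := by
    funext x; simp [Function.comp, mulVec_mulVec, hA'def]
  have hcomp2 : ((fun τ : Fin d → ℝ => (1 - S * Sb) *ᵥ τ) ∘ fun x => t *ᵥ x)
      = fun x => B' *ᵥ x := by
    funext x; simp [Function.comp, mulVec_mulVec, hB'def]
  refine ⟨?_, ⟨A', ?_⟩, ⟨B', ?_⟩⟩
  · rw [hN, hge]
    refine indepFun_map_of_comp (measurable_mulVec t)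
      (measurable_mulVec sq) (measurable_mulVec (1 - S * Sb)) ?_
    rw [hcomp1, hcomp2]
    exact indep_mulVec A' B' K hKsym hKK hA'K hB'K
  · rw [hN, Measure.map_map (measurable_mulVec sq) (measurable_mulVec t), hcomp1]
  · rw [hge, hN, Measure.map_map (measurable_mulVec (1 - S * Sb)) (measurable_mulVec t), hcomp2]
end
end
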